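/- Let p be an odd prime, m ≥ 1, and let α, i, j be positive integers with α ≡ 1 (mod p^m). Then α^j·(α^{ij} − 1)/(α^j − 1) ≡ i + (α−1)·i·j·(i+1)/2 (mod p^{2m}), where the left-hand side equals the geometric sum α^j + α^{2j} + ⋯ + α^{ij}. -/

import Mathlib

lemma gauss_aux : ∀ n : ℕ, (∑ t ∈ Finset.range n, ((t : ℤ) + 1)) * 2 = (n : ℤ) * ((n : ℤ) + 1) := by
  intro n
  induction n with
  | zero => simp
  | succ k ih =>
    rw [Finset.sum_range_succ]
    push_cast
    nlinarith [ih]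

lemma sum_modeq_aux (N : ℤ) {β : Type} (s : Finset β) (f g : β → ℤ)
    (h : ∀ t ∈ s, f t ≡ g t [ZMOD N]) :
    (∑ t ∈ s, f t) ≡ (∑ t ∈ s, g t) [ZMOD N] := by
  classical
  induction s using Finset.induction with
  | empty => simp
  | insert _ _ hx ih =>
    rw [Finset.sum_insert hx, Finset.sum_insert hx]
    exact (h _ (Finset.mem_insert_self _ _)).add
      (ih fun t ht => h t (Finset.mem_insert_of_mem ht))

lemma pow_modeq_aux (N d : ℤ) (hd : N ∣ d ^ 2) :
    ∀ n : ℕ, (1 + d) ^ n ≡ 1 + n * d [ZMOD N] := by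
  have h0 : d ^ 2 ≡ 0 [ZMOD N] := (Int.modEq_zero_iff_dvd).mpr hd
  intro n
  induction n with
  | zero => simp
  | succ n ih =>
    have h1 : (1 + d) ^ (n + 1) = (1 + d) ^ n * (1 + d) := by ring
    rw [h1]
    calc (1 + d) ^ n * (1 + d) ≡ (1 + n * d) * (1 + d) [ZMOD N] :=
          ih.mul_right _
      _ = (1 + (n + 1 : ℕ) * d) + n * d ^ 2 := by push_cast; ring
      _ ≡ (1 + (n + 1 : ℕ) * d) + n * 0 [ZMOD N] :=
          Int.ModEq.add_left _ (h0.mul_left _)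
      _ = 1 + (n + 1 : ℕ) * d := by ring

theorem stmt_18 (p m : ℕ) (hp : p.Prime) (hodd : Odd p) (hm : 1 ≤ m)
    (α i j : ℕ) (hα1 : 1 < α) (hi : 1 ≤ i) (hj : 1 ≤ j)
    (hα : α ≡ 1 [MOD p ^ m]) :
    (∑ t ∈ Finset.range i, (α : ℤ) ^ (j * (t + 1))) ≡
      (i : ℤ) + ((α : ℤ) - 1) * ((i : ℤ) * (j : ℤ) * ((i : ℤ) + 1) / 2)
      [ZMOD (p : ℤ) ^ (2 * m)] := by
  set d : ℤ := (α : ℤ) - 1 with hdd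
  have hdvd : ((p : ℤ) ^ m) ∣ d := by
    have h := hα.dvd
    push_cast at h
    exact dvd_sub_comm.mp h
  have hN : ((p : ℤ) ^ (2 * m)) ∣ d ^ 2 := by
    rw [pow_two, two_mul, pow_add]
    exact mul_dvd_mul hdvd hdvd
  have hαd : (α : ℤ) = 1 + d := by ring
  -- each term
  have hterm : ∀ t : ℕ, (α : ℤ) ^ (j * (t + 1)) ≡ 1 + (j * (t + 1) : ℕ) * d
      [ZMOD (p : ℤ) ^ (2 * m)] := by
    intro t
    rw [hαd]
    exact pow_modeq_aux _ d hN _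
  have hsum : (∑ t ∈ Finset.range i, (α : ℤ) ^ (j * (t + 1))) ≡
      (∑ t ∈ Finset.range i, (1 + (j * (t + 1) : ℕ) * d))
      [ZMOD (p : ℤ) ^ (2 * m)] :=
    sum_modeq_aux _ _ _ _ (fun t _ => hterm t)
  -- Gauss sum
  have hS := gauss_aux i
  set S : ℤ := ∑ t ∈ Finset.range i, ((t : ℤ) + 1) with hSdef
  have hrhs : (∑ t ∈ Finset.range i, (1 + (j * (t + 1) : ℕ) * d)) =
      (i : ℤ) + d * (j * S) := by
    rw [Finset.sum_add_distrib]
    simp only [Finset.sum_const, Finset.card_range, nsmul_eq_mul, mul_one]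
    rw [hSdef, Finset.mul_sum, Finset.mul_sum]
    congr 1
    apply Finset.sum_congr rfl
    intro t _
    push_cast
    ring
  have hdiv : (i : ℤ) * (j : ℤ) * ((i : ℤ) + 1) / 2 = j * S := by
    have : (i : ℤ) * (j : ℤ) * ((i : ℤ) + 1) = 2 * (j * S) := by
      have := hS
      nlinarith [hS]
    rw [this, Int.mul_ediv_cancel_left _ (by norm_num)]
  rw [hdiv]
  calc (∑ t ∈ Finset.range i, (α : ℤ) ^ (j * (t + 1))) ≡
      (∑ t ∈ Finset.range i, (1 + (j * (t + 1) : ℕ) * d)) [ZMOD (p : ℤ) ^ (2 * m)] := hsum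
    _ = (i : ℤ) + d * (j * S) := hrhs
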